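/- If δT ≥ q and δX ≥ q, then the evaluation map ev_{(δT,δX)} : R(δT,δX) → 𝔽_q^{(q+1)²} is surjective; in particular dim C_η(δT,δX) = (q+1)². -/

import Mathlib

open MvPolynomial

attribute [local instance] Classical.propDecidable

namespace Hirz

/-- Index type for the `(q+1)²` rational points of the Hirzebruch surface. -/
abbrev HIdx (F : Type) := (F × F) ⊕ F ⊕ F ⊕ Unit

variable (F : Type) [Field F] [Fintype F]

/-- The homogeneous coordinates of the rational points of `H_η`. -/
def pt : HIdx F → Fin 4 → F
  | Sum.inl (a, b) => ![1, a, 1, b]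
  | Sum.inr (Sum.inl b) => ![0, 1, 1, b]
  | Sum.inr (Sum.inr (Sum.inl a)) => ![1, a, 0, 1]
  | Sum.inr (Sum.inr (Sum.inr _)) => ![0, 1, 0, 1]

/-- Evaluation of a polynomial at all the rational points. -/
noncomputable def ev (P : MvPolynomial (Fin 4) F) : HIdx F → F :=
  fun i => eval (pt F i) P

/-- `c` is the exponent vector (T1,T2,X1,X2) of a monomial of bidegree `(δT, δX)`. -/
def IsBideg (η : ℕ) (δT : ℤ) (δX : ℕ) (c : Fin 4 → ℕ) : Prop :=
  (c 0 : ℤ) + (c 1 : ℤ) - (η : ℤ) * (c 2 : ℤ) = δT ∧ c 2 + c 3 = δX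

/-- The monomial with exponent vector `c`. -/
noncomputable def mon (c : Fin 4 → ℕ) : MvPolynomial (Fin 4) F :=
  monomial (Finsupp.equivFunOnFinite.symm c) (1 : F)

/-- The set of monomials of bidegree `(δT, δX)`. -/
def MSet (η : ℕ) (δT : ℤ) (δX : ℕ) : Set (MvPolynomial (Fin 4) F) :=
  {P | ∃ c : Fin 4 → ℕ, IsBideg η δT δX c ∧ P = mon F c}

/-- `R(δT,δX)`, the space of homogeneous polynomials of bidegree `(δT,δX)`. -/
noncomputable def RSpan (η : ℕ) (δT : ℤ) (δX : ℕ) : Submodule F (MvPolynomial (Fin 4) F) :=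
  Submodule.span F (MSet F η δT δX)

/-- The code `C_η(δT,δX)`, image of `R(δT,δX)` under evaluation. -/
noncomputable def Code (η : ℕ) (δT : ℤ) (δX : ℕ) : Submodule F (HIdx F → F) :=
  Submodule.span F (ev F '' MSet F η δT δX)

/-- Hamming weight. -/
noncomputable def wt (v : HIdx F → F) : ℕ := {i | v i ≠ 0}.ncard

/-- Minimum distance of `C_η(δT,δX)`. -/
noncomputable def dmin (η : ℕ) (δT : ℤ) (δX : ℕ) : ℕ :=
  sInf {w : ℕ | ∃ v ∈ Code F η δT δX, v ≠ 0 ∧ wt F v = w}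

/-- `⌊A⌋` where `A = δX` if `δT ≥ 0` and `A = δ/η` otherwise. -/
def Afloor (η : ℕ) (δT : ℤ) (δX : ℕ) : ℤ :=
  if 0 ≤ δT then (δX : ℤ) else (δT + (η : ℤ) * (δX : ℤ)) / (η : ℤ)

/-- Exponent vector of the monomial `M(d2,c2)`. -/
def Mexp (η : ℕ) (δT : ℤ) (δX : ℕ) (d2 c2 : ℕ) : Fin 4 → ℕ :=
  ![(δT + (η : ℤ) * ((δX : ℤ) - (d2 : ℤ)) - (c2 : ℤ)).toNat, c2, δX - d2, d2]

/-- The monomial `M(d2,c2) = T1^(δT+η(δX-d2)-c2) T2^c2 X1^(δX-d2) X2^d2`. -/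
noncomputable def Mmon (η : ℕ) (δT : ℤ) (δX : ℕ) (d2 c2 : ℕ) : MvPolynomial (Fin 4) F :=
  mon F (Mexp η δT δX d2 c2)

/-- The lattice polygon `P(δT,δX)`. -/
def PSet (η : ℕ) (δT : ℤ) (δX : ℕ) : Set (ℕ × ℕ) :=
  {p | (p.1 : ℤ) ≤ Afloor η δT δX ∧ (p.2 : ℤ) ≤ δT + (η : ℤ) * ((δX : ℤ) - (p.1 : ℤ))}

/-- The set `A_X = {α : α ≤ min(⌊A⌋, q-1)} ∪ ({A} ∩ ℕ)`. -/
def AX (η : ℕ) (δT : ℤ) (δX : ℕ) (q : ℕ) : Set ℕ :=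
  {α | (α : ℤ) ≤ min (Afloor η δT δX) ((q : ℤ) - 1)} ∪
    {α | if 0 ≤ δT then (α : ℤ) = (δX : ℤ)
         else (α : ℤ) * (η : ℤ) = δT + (η : ℤ) * (δX : ℤ)}

/-- The set of representatives `K(δT,δX)`. -/
def KSet (η : ℕ) (δT : ℤ) (δX : ℕ) (q : ℕ) : Set (ℕ × ℕ) :=
  {p | p.1 ∈ AX η δT δX q ∧
    ((p.2 : ℤ) ≤ min (δT + (η : ℤ) * (δX : ℤ) - (η : ℤ) * (p.1 : ℤ)) (q : ℤ) - 1 ∨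
      (p.2 : ℤ) = δT + (η : ℤ) * (δX : ℤ) - (η : ℤ) * (p.1 : ℤ))}

/-- Condition (H): `η ≥ 2`, `δT < 0`, `η ∣ δT` and `q ≤ δX + δT/η`. -/
def CondH (η : ℕ) (δT : ℤ) (δX : ℕ) (q : ℕ) : Prop :=
  2 ≤ η ∧ δT < 0 ∧ (η : ℤ) ∣ δT ∧ (q : ℤ) ≤ (δX : ℤ) + δT / (η : ℤ)

/-- `K*(δT,δX)`: `K(δT,δX)` minus `(δ/η, 0)` if (H) holds. -/
def KStar (η : ℕ) (δT : ℤ) (δX : ℕ) (q : ℕ) : Set (ℕ × ℕ) :=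
  if CondH η δT δX q then
    KSet η δT δX q \ {(((δT + (η : ℤ) * (δX : ℤ)) / (η : ℤ)).toNat, 0)}
  else KSet η δT δX q

/-- `Δ*(δT,δX) = {M(α,β) : (α,β) ∈ K*(δT,δX)}`. -/
noncomputable def DeltaStar (η : ℕ) (δT : ℤ) (δX : ℕ) (q : ℕ) :
    Set (MvPolynomial (Fin 4) F) :=
  {P | ∃ p ∈ KStar η δT δX q, P = Mmon F η δT δX p.1 p.2}

set_option linter.unusedSectionVars false
section Aux
open Finset

-- weights
def wT (η : ℕ) : Fin 4 → ℤ := ![1, 1, -(η : ℤ), 0]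
def wX : Fin 4 → ℤ := ![0, 0, 1, 1]

lemma iwh_pow {M : Type*} [AddCommMonoid M] {w : Fin 4 → M}
    {φ : MvPolynomial (Fin 4) F} {m : M} (h : IsWeightedHomogeneous w φ m) (n : ℕ) :
    IsWeightedHomogeneous w (φ ^ n) (n • m) := by
  induction n with
  | zero => simpa using isWeightedHomogeneous_one F w
  | succ k ih => rw [pow_succ, succ_nsmul]; exact ih.mul h

lemma iwh_sub {M : Type*} [AddCommGroup M] {w : Fin 4 → M} {φ ψ : MvPolynomial (Fin 4) F} {m : M}
    (h1 : IsWeightedHomogeneous w φ m) (h2 : IsWeightedHomogeneous w ψ m) :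
    IsWeightedHomogeneous w (φ - ψ) m := by
  intro d hd
  rw [coeff_sub] at hd
  by_cases hc : coeff d φ = 0
  · exact h2 (by intro h0; apply hd; rw [hc, h0, sub_zero])
  · exact h1 hc

lemma iwh_congr {M : Type*} [AddCommMonoid M] {w : Fin 4 → M}
    {φ : MvPolynomial (Fin 4) F} {m n : M} (h : IsWeightedHomogeneous w φ m) (e : m = n) :
    IsWeightedHomogeneous w φ n := e ▸ h

lemma iwh_prod_const {M : Type*} [AddCommMonoid M] (s : Finset F)
    (φ : F → MvPolynomial (Fin 4) F) {w : Fin 4 → M} {k : M}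
    (h : ∀ c ∈ s, IsWeightedHomogeneous w (φ c) k) :
    IsWeightedHomogeneous w (∏ c ∈ s, φ c) (s.card • k) := by
  have := IsWeightedHomogeneous.prod s φ (fun _ => k) h
  simpa using this

lemma weight_four {M : Type*} [AddCommMonoid M] (w : Fin 4 → M) (d : Fin 4 →₀ ℕ) :
    Finsupp.weight w d = d 0 • w 0 + d 1 • w 1 + d 2 • w 2 + d 3 • w 3 := by
  rw [Finsupp.weight_apply, Finsupp.sum_fintype]
  · exact Fin.sum_univ_four _
  · intro i; simp

/-- Generic membership criterion for `RSpan`. -/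
lemma mem_RSpan_of_iwh (η : ℕ) (δT : ℤ) (δX : ℕ) (P : MvPolynomial (Fin 4) F)
    (h1 : IsWeightedHomogeneous (wT η) P δT) (h2 : IsWeightedHomogeneous wX P (δX : ℤ)) :
    P ∈ RSpan F η δT δX := by
  nth_rewrite 1 [P.as_sum]
  apply Submodule.sum_mem
  intro d hd
  have hc : coeff d P ≠ 0 := mem_support_iff.mp hd
  have e1 := h1 hc
  have e2 := h2 hc
  rw [weight_four] at e1 e2
  have hmon : (monomial d) (coeff d P) = coeff d P • mon F ⇑d := by
    rw [mon, Finsupp.equivFunOnFinite_symm_coe, smul_monomial, smul_eq_mul, mul_one]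
  rw [hmon]
  refine Submodule.smul_mem _ _ (Submodule.subset_span ⟨⇑d, ⟨?_, ?_⟩, rfl⟩)
  · simp only [wT, Matrix.cons_val_zero, Matrix.cons_val_one, Matrix.head_cons,
      Matrix.cons_val_two, Matrix.cons_val_three, Matrix.tail_cons, smul_eq_mul,
      nsmul_eq_mul, mul_one, mul_zero, add_zero] at e1
    linarith [e1]
  · simp only [wX, Matrix.cons_val_zero, Matrix.cons_val_one, Matrix.head_cons,
      Matrix.cons_val_two, Matrix.cons_val_three, Matrix.tail_cons, nsmul_eq_mul,
      mul_one, mul_zero, zero_add, add_zero] at e2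
    omega


/-- T-block targeting `(1,a)`. -/
noncomputable def TAp (a : F) (m : ℕ) : MvPolynomial (Fin 4) F :=
  X 0 ^ (m + 1) * ∏ c ∈ Finset.univ.erase a, (X 1 - C c * X 0)

/-- T-block targeting `(0,1)`. -/
noncomputable def TBp (m : ℕ) : MvPolynomial (Fin 4) F :=
  X 1 ^ m * ∏ c ∈ (Finset.univ : Finset F), (X 1 - C c * X 0)

/-- X-block targeting `(1,b)`, with homogenizer `X t ^ η`. -/
noncomputable def XAp (η : ℕ) (t : Fin 4) (b : F) (m : ℕ) : MvPolynomial (Fin 4) F :=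
  (X 2 * X t ^ η) ^ (m + 1) * ∏ c ∈ Finset.univ.erase b, (X 3 - C c * (X 2 * X t ^ η))

/-- X-block targeting `(0,1)`. -/
noncomputable def XBp (η : ℕ) (t : Fin 4) (m : ℕ) : MvPolynomial (Fin 4) F :=
  X 3 ^ m * ∏ c ∈ (Finset.univ : Finset F), (X 3 - C c * (X 2 * X t ^ η))

lemma card_pos' : 1 ≤ Fintype.card F := Fintype.card_pos

lemma iwh_TAp_T (η : ℕ) (a : F) (m : ℕ) :
    IsWeightedHomogeneous (wT η) (TAp F a m) ((m : ℤ) + Fintype.card F) := by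
  have hX0 : IsWeightedHomogeneous (wT η) (X 0 : MvPolynomial (Fin 4) F) 1 :=
    isWeightedHomogeneous_X F _ 0
  have hX1 : IsWeightedHomogeneous (wT η) (X 1 : MvPolynomial (Fin 4) F) 1 :=
    isWeightedHomogeneous_X F _ 1
  have hfac : ∀ c ∈ Finset.univ.erase a,
      IsWeightedHomogeneous (wT η) ((X 1 - C c * X 0 : MvPolynomial (Fin 4) F)) 1 := by
    intro c _
    exact iwh_sub F hX1 (iwh_congr F ((isWeightedHomogeneous_C _ c).mul hX0) (zero_add 1))
  have := (iwh_pow F hX0 (m + 1)).mul (iwh_prod_const F _ _ hfac)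
  refine iwh_congr F this ?_
  rw [Finset.card_erase_of_mem (Finset.mem_univ a), Finset.card_univ]
  have h1 : 1 ≤ Fintype.card F := Fintype.card_pos
  simp only [nsmul_eq_mul, mul_one]
  omega

lemma iwh_TAp_X (η : ℕ) (a : F) (m : ℕ) :
    IsWeightedHomogeneous wX (TAp F a m) 0 := by
  have hX0 : IsWeightedHomogeneous wX (X 0 : MvPolynomial (Fin 4) F) 0 :=
    isWeightedHomogeneous_X F _ 0
  have hX1 : IsWeightedHomogeneous wX (X 1 : MvPolynomial (Fin 4) F) 0 :=
    isWeightedHomogeneous_X F _ 1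
  have hfac : ∀ c ∈ Finset.univ.erase a,
      IsWeightedHomogeneous wX ((X 1 - C c * X 0 : MvPolynomial (Fin 4) F)) 0 := by
    intro c _
    exact iwh_sub F hX1 (iwh_congr F ((isWeightedHomogeneous_C _ c).mul hX0) (zero_add 0))
  have := (iwh_pow F hX0 (m + 1)).mul (iwh_prod_const F _ _ hfac)
  exact iwh_congr F this (by simp)

lemma iwh_TBp_T (η : ℕ) (m : ℕ) :
    IsWeightedHomogeneous (wT η) (TBp F m) ((m : ℤ) + Fintype.card F) := by
  have hX0 : IsWeightedHomogeneous (wT η) (X 0 : MvPolynomial (Fin 4) F) 1 :=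
    isWeightedHomogeneous_X F _ 0
  have hX1 : IsWeightedHomogeneous (wT η) (X 1 : MvPolynomial (Fin 4) F) 1 :=
    isWeightedHomogeneous_X F _ 1
  have hfac : ∀ c ∈ (Finset.univ : Finset F),
      IsWeightedHomogeneous (wT η) ((X 1 - C c * X 0 : MvPolynomial (Fin 4) F)) 1 := by
    intro c _
    exact iwh_sub F hX1 (iwh_congr F ((isWeightedHomogeneous_C _ c).mul hX0) (zero_add 1))
  have := (iwh_pow F hX1 m).mul (iwh_prod_const F _ _ hfac)
  refine iwh_congr F this ?_
  rw [Finset.card_univ]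
  simp only [nsmul_eq_mul, mul_one]

lemma iwh_TBp_X (η : ℕ) (m : ℕ) :
    IsWeightedHomogeneous wX (TBp F m) 0 := by
  have hX0 : IsWeightedHomogeneous wX (X 0 : MvPolynomial (Fin 4) F) 0 :=
    isWeightedHomogeneous_X F _ 0
  have hX1 : IsWeightedHomogeneous wX (X 1 : MvPolynomial (Fin 4) F) 0 :=
    isWeightedHomogeneous_X F _ 1
  have hfac : ∀ c ∈ (Finset.univ : Finset F),
      IsWeightedHomogeneous wX ((X 1 - C c * X 0 : MvPolynomial (Fin 4) F)) 0 := by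
    intro c _
    exact iwh_sub F hX1 (iwh_congr F ((isWeightedHomogeneous_C _ c).mul hX0) (zero_add 0))
  have := (iwh_pow F hX1 m).mul (iwh_prod_const F _ _ hfac)
  exact iwh_congr F this (by simp)

lemma iwh_XAp_T (η : ℕ) (t : Fin 4) (b : F) (m : ℕ) (ht : wT η t = 1) :
    IsWeightedHomogeneous (wT η) (XAp F η t b m) 0 := by
  have hG : IsWeightedHomogeneous (wT η) ((X 2 * X t ^ η : MvPolynomial (Fin 4) F)) 0 := by
    have := (isWeightedHomogeneous_X F (wT η) 2).mul (iwh_pow F (isWeightedHomogeneous_X F (wT η) t) η)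
    refine iwh_congr F this ?_
    rw [ht]
    show -(η : ℤ) + (η : ℕ) • (1 : ℤ) = 0
    simp
  have hX3 : IsWeightedHomogeneous (wT η) (X 3 : MvPolynomial (Fin 4) F) 0 :=
    isWeightedHomogeneous_X F _ 3
  have hfac : ∀ c ∈ Finset.univ.erase b,
      IsWeightedHomogeneous (wT η) ((X 3 - C c * (X 2 * X t ^ η) : MvPolynomial (Fin 4) F)) 0 := by
    intro c _
    exact iwh_sub F hX3 (iwh_congr F ((isWeightedHomogeneous_C _ c).mul hG) (zero_add 0))
  have := (iwh_pow F hG (m + 1)).mul (iwh_prod_const F _ _ hfac)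
  exact iwh_congr F this (by simp)

lemma iwh_XAp_X (η : ℕ) (t : Fin 4) (b : F) (m : ℕ) (ht : wX t = (0 : ℤ)) :
    IsWeightedHomogeneous wX (XAp F η t b m) ((m : ℤ) + Fintype.card F) := by
  have hG : IsWeightedHomogeneous wX ((X 2 * X t ^ η : MvPolynomial (Fin 4) F)) 1 := by
    have := (isWeightedHomogeneous_X F wX 2).mul (iwh_pow F (isWeightedHomogeneous_X F wX t) η)
    refine iwh_congr F this ?_
    rw [ht]
    show wX 2 + (η : ℕ) • (0 : ℤ) = 1
    simp [wX]
  have hX3 : IsWeightedHomogeneous wX (X 3 : MvPolynomial (Fin 4) F) 1 :=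
    isWeightedHomogeneous_X F _ 3
  have hfac : ∀ c ∈ Finset.univ.erase b,
      IsWeightedHomogeneous wX ((X 3 - C c * (X 2 * X t ^ η) : MvPolynomial (Fin 4) F)) 1 := by
    intro c _
    exact iwh_sub F hX3 (iwh_congr F ((isWeightedHomogeneous_C _ c).mul hG) (zero_add 1))
  have := (iwh_pow F hG (m + 1)).mul (iwh_prod_const F _ _ hfac)
  refine iwh_congr F this ?_
  rw [Finset.card_erase_of_mem (Finset.mem_univ b), Finset.card_univ]
  have h1 : 1 ≤ Fintype.card F := Fintype.card_pos
  simp only [nsmul_eq_mul, mul_one]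
  omega

lemma iwh_XBp_T (η : ℕ) (t : Fin 4) (m : ℕ) (ht : wT η t = 1) :
    IsWeightedHomogeneous (wT η) (XBp F η t m) 0 := by
  have hG : IsWeightedHomogeneous (wT η) ((X 2 * X t ^ η : MvPolynomial (Fin 4) F)) 0 := by
    have := (isWeightedHomogeneous_X F (wT η) 2).mul (iwh_pow F (isWeightedHomogeneous_X F (wT η) t) η)
    refine iwh_congr F this ?_
    rw [ht]
    show -(η : ℤ) + (η : ℕ) • (1 : ℤ) = 0
    simp
  have hX3 : IsWeightedHomogeneous (wT η) (X 3 : MvPolynomial (Fin 4) F) 0 :=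
    isWeightedHomogeneous_X F _ 3
  have hfac : ∀ c ∈ (Finset.univ : Finset F),
      IsWeightedHomogeneous (wT η) ((X 3 - C c * (X 2 * X t ^ η) : MvPolynomial (Fin 4) F)) 0 := by
    intro c _
    exact iwh_sub F hX3 (iwh_congr F ((isWeightedHomogeneous_C _ c).mul hG) (zero_add 0))
  have := (iwh_pow F hX3 m).mul (iwh_prod_const F _ _ hfac)
  exact iwh_congr F this (by simp)

lemma iwh_XBp_X (η : ℕ) (t : Fin 4) (m : ℕ) (ht : wX t = (0 : ℤ)) :
    IsWeightedHomogeneous wX (XBp F η t m) ((m : ℤ) + Fintype.card F) := by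
  have hG : IsWeightedHomogeneous wX ((X 2 * X t ^ η : MvPolynomial (Fin 4) F)) 1 := by
    have := (isWeightedHomogeneous_X F wX 2).mul (iwh_pow F (isWeightedHomogeneous_X F wX t) η)
    refine iwh_congr F this ?_
    rw [ht]
    show wX 2 + (η : ℕ) • (0 : ℤ) = 1
    simp [wX]
  have hX3 : IsWeightedHomogeneous wX (X 3 : MvPolynomial (Fin 4) F) 1 :=
    isWeightedHomogeneous_X F _ 3
  have hfac : ∀ c ∈ (Finset.univ : Finset F),
      IsWeightedHomogeneous wX ((X 3 - C c * (X 2 * X t ^ η) : MvPolynomial (Fin 4) F)) 1 := by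
    intro c _
    exact iwh_sub F hX3 (iwh_congr F ((isWeightedHomogeneous_C _ c).mul hG) (zero_add 1))
  have := (iwh_pow F hX3 m).mul (iwh_prod_const F _ _ hfac)
  refine iwh_congr F this ?_
  rw [Finset.card_univ]
  simp only [nsmul_eq_mul, mul_one]



lemma eval_TAp (v : Fin 4 → F) (a : F) (m : ℕ) :
    eval v (TAp F a m) = v 0 ^ (m + 1) * ∏ c ∈ Finset.univ.erase a, (v 1 - c * v 0) := by
  simp [TAp]

lemma eval_TBp (v : Fin 4 → F) (m : ℕ) :
    eval v (TBp F m) = v 1 ^ m * ∏ c ∈ (Finset.univ : Finset F), (v 1 - c * v 0) := by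
  simp [TBp]

lemma eval_XAp (v : Fin 4 → F) (η : ℕ) (t : Fin 4) (b : F) (m : ℕ) :
    eval v (XAp F η t b m) =
      (v 2 * v t ^ η) ^ (m + 1) * ∏ c ∈ Finset.univ.erase b, (v 3 - c * (v 2 * v t ^ η)) := by
  simp [XAp]

lemma eval_XBp (v : Fin 4 → F) (η : ℕ) (t : Fin 4) (m : ℕ) :
    eval v (XBp F η t m) =
      v 3 ^ m * ∏ c ∈ (Finset.univ : Finset F), (v 3 - c * (v 2 * v t ^ η)) := by
  simp [XBp]

lemma prod_erase_ne_zero (a : F) : ∏ c ∈ Finset.univ.erase a, (a - c) ≠ 0 :=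
  Finset.prod_ne_zero_iff.mpr fun c hc => sub_ne_zero.mpr (Ne.symm (Finset.mem_erase.mp hc).1)

lemma prod_erase_eq_zero {a a' : F} (h : a' ≠ a) :
    ∏ c ∈ Finset.univ.erase a, (a' - c) = 0 :=
  Finset.prod_eq_zero (Finset.mem_erase.mpr ⟨h, Finset.mem_univ _⟩) (sub_self a')

lemma prod_univ_eq_zero (b : F) : ∏ c ∈ (Finset.univ : Finset F), (b - c) = 0 :=
  Finset.prod_eq_zero (Finset.mem_univ b) (sub_self b)

/-- Indicator polynomials. -/
noncomputable def ind (η mT mX : ℕ) : HIdx F → MvPolynomial (Fin 4) F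
  | Sum.inl (a, b) => TAp F a mT * XAp F η 0 b mX
  | Sum.inr (Sum.inl b) => TBp F mT * XAp F η 1 b mX
  | Sum.inr (Sum.inr (Sum.inl a)) => TAp F a mT * XBp F η 0 mX
  | Sum.inr (Sum.inr (Sum.inr _)) => TBp F mT * XBp F η 1 mX

lemma ind_mem (η : ℕ) (δT : ℤ) (δX : ℕ) (mT mX : ℕ)
    (hmT : (mT : ℤ) + Fintype.card F = δT) (hmX : (mX : ℤ) + Fintype.card F = (δX : ℤ))
    (i : HIdx F) : ind F η mT mX i ∈ RSpan F η δT δX := by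
  have h0T : wT η 0 = 1 := rfl
  have h1T : wT η 1 = 1 := rfl
  have h0X : wX 0 = (0 : ℤ) := rfl
  have h1X : wX 1 = (0 : ℤ) := rfl
  have eT : (mT : ℤ) + Fintype.card F + 0 = δT := by rw [add_zero]; exact hmT
  have eX : (0 : ℤ) + ((mX : ℤ) + Fintype.card F) = (δX : ℤ) := by rw [zero_add]; exact hmX
  rcases i with ⟨a, b⟩ | (b | (a | u))
  · exact mem_RSpan_of_iwh F η δT δX _
      (iwh_congr F ((iwh_TAp_T F η a mT).mul (iwh_XAp_T F η 0 b mX h0T)) eT)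
      (iwh_congr F ((iwh_TAp_X F η a mT).mul (iwh_XAp_X F η 0 b mX h0X)) eX)
  · exact mem_RSpan_of_iwh F η δT δX _
      (iwh_congr F ((iwh_TBp_T F η mT).mul (iwh_XAp_T F η 1 b mX h1T)) eT)
      (iwh_congr F ((iwh_TBp_X F η mT).mul (iwh_XAp_X F η 1 b mX h1X)) eX)
  · exact mem_RSpan_of_iwh F η δT δX _
      (iwh_congr F ((iwh_TAp_T F η a mT).mul (iwh_XBp_T F η 0 mX h0T)) eT)
      (iwh_congr F ((iwh_TAp_X F η a mT).mul (iwh_XBp_X F η 0 mX h0X)) eX)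
  · exact mem_RSpan_of_iwh F η δT δX _
      (iwh_congr F ((iwh_TBp_T F η mT).mul (iwh_XBp_T F η 1 mX h1T)) eT)
      (iwh_congr F ((iwh_TBp_X F η mT).mul (iwh_XBp_X F η 1 mX h1X)) eX)

lemma ev_ind_diag (η mT mX : ℕ) (i : HIdx F) : ev F (ind F η mT mX i) i ≠ 0 := by
  rcases i with ⟨a, b⟩ | (b | (a | u)) <;>
    simp only [ev, ind, pt, map_mul, eval_TAp, eval_TBp, eval_XAp, eval_XBp,
      Matrix.cons_val_zero, Matrix.cons_val_one, Matrix.head_cons,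
      Matrix.cons_val_two, Matrix.cons_val_three, Matrix.tail_cons,
      one_pow, one_mul, mul_one, mul_zero, zero_mul, sub_zero] <;>
    simp <;>
    first
    | exact ⟨prod_erase_ne_zero F _, prod_erase_ne_zero F _⟩
    | exact prod_erase_ne_zero F _

lemma ev_ind_off (η mT mX : ℕ) {i j : HIdx F} (h : i ≠ j) :
    ev F (ind F η mT mX i) j = 0 := by
  rcases i with ⟨a, b⟩ | (b | (a | u)) <;> rcases j with ⟨a', b'⟩ | (b' | (a' | u')) <;>
    simp only [ev, ind, pt, map_mul, eval_TAp, eval_TBp, eval_XAp, eval_XBp,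
      Matrix.cons_val_zero, Matrix.cons_val_one, Matrix.head_cons,
      Matrix.cons_val_two, Matrix.cons_val_three, Matrix.tail_cons,
      one_pow, one_mul, mul_one, mul_zero, zero_mul, sub_zero]
  case inl.inl =>
    by_cases ha : a' = a
    · subst ha
      have hb : b ≠ b' := by simpa using h
      simp [prod_erase_eq_zero F (Ne.symm hb)]
    · simp [prod_erase_eq_zero F ha]
  case inl.inr.inl => simp
  case inl.inr.inr.inl => simp
  case inl.inr.inr.inr => simp
  case inr.inl.inl => simp [prod_univ_eq_zero F a']
  case inr.inl.inr.inl =>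
    have hb : b ≠ b' := by simpa using h
    simp [prod_erase_eq_zero F (Ne.symm hb)]
  case inr.inl.inr.inr.inl => simp [prod_univ_eq_zero F a']
  case inr.inl.inr.inr.inr => simp
  case inr.inr.inl.inl =>
    by_cases ha : a' = a
    · subst ha
      simp [prod_univ_eq_zero F b']
    · simp [prod_erase_eq_zero F ha]
  case inr.inr.inl.inr.inl => simp
  case inr.inr.inl.inr.inr.inl =>
    have ha : a ≠ a' := by simpa using h
    simp [prod_erase_eq_zero F (Ne.symm ha)]
  case inr.inr.inl.inr.inr.inr => simp
  case inr.inr.inr.inl => simp [prod_univ_eq_zero F a']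
  case inr.inr.inr.inr.inl => simp [prod_univ_eq_zero F b']
  case inr.inr.inr.inr.inr.inl => simp [prod_univ_eq_zero F a']
  case inr.inr.inr.inr.inr.inr => exact absurd rfl h



/-- Evaluation as a linear map. -/
noncomputable def evL : MvPolynomial (Fin 4) F →ₗ[F] (HIdx F → F) where
  toFun := ev F
  map_add' := fun p q => by funext j; simp [ev]
  map_smul' := fun c p => by funext j; simp [ev, smul_eq_C_mul]

lemma Code_eq_map (η : ℕ) (δT : ℤ) (δX : ℕ) :
    Code F η δT δX = Submodule.map (evL F) (RSpan F η δT δX) := by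
  rw [Code, RSpan, Submodule.map_span]
  rfl


end Aux
/-- if `δT ≥ q` and `δX ≥ q` then the evaluation map is surjective on
`R(δT,δX)`, and in particular `dim C_η(δT,δX) = (q+1)²`. -/
theorem statement6 (η : ℕ) (δT : ℤ) (δX : ℕ)
    (hT : (Fintype.card F : ℤ) ≤ δT) (hX : Fintype.card F ≤ δX) :
    (∀ v : HIdx F → F, ∃ P ∈ RSpan F η δT δX, ev F P = v) ∧
      Module.finrank F (Code F η δT δX) = (Fintype.card F + 1) ^ 2 := by
  have hq1 : 1 ≤ Fintype.card F := Fintype.card_pos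
  have hmT : (((δT - Fintype.card F).toNat : ℤ)) + Fintype.card F = δT := by
    rw [Int.toNat_of_nonneg (by omega)]; ring
  have hmX : ((δX - Fintype.card F : ℕ) : ℤ) + Fintype.card F = (δX : ℤ) := by omega
  set mT := (δT - (Fintype.card F : ℤ)).toNat with hmTdef
  set mX := δX - Fintype.card F with hmXdef
  have hsurj : ∀ v : HIdx F → F, ∃ P ∈ RSpan F η δT δX, ev F P = v := by
    intro v
    refine ⟨∑ i : HIdx F, (v i * (ev F (ind F η mT mX i) i)⁻¹) • ind F η mT mX i,
      Submodule.sum_mem _ fun i _ =>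
        Submodule.smul_mem _ _ (ind_mem F η δT δX mT mX hmT hmX i), ?_⟩
    funext j
    have hev : ev F (∑ i : HIdx F, (v i * (ev F (ind F η mT mX i) i)⁻¹) • ind F η mT mX i) j
        = ∑ i : HIdx F, (v i * (ev F (ind F η mT mX i) i)⁻¹) * ev F (ind F η mT mX i) j := by
      simp [ev, smul_eq_C_mul]
    rw [hev, Finset.sum_eq_single j]
    · have hd := ev_ind_diag F η mT mX j
      field_simp
    · intro i _ hij
      rw [ev_ind_off F η mT mX hij, mul_zero]
    · intro h; exact absurd (Finset.mem_univ j) h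
  refine ⟨hsurj, ?_⟩
  have hcode : Code F η δT δX = ⊤ := by
    rw [eq_top_iff]
    intro v _
    obtain ⟨P, hP, hPv⟩ := hsurj v
    rw [Code_eq_map]
    exact ⟨P, hP, hPv⟩
  rw [hcode, finrank_top, Module.finrank_pi]
  simp only [HIdx, Fintype.card_sum, Fintype.card_prod, Fintype.card_unit]
  ring

end Hirz
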